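/- arXiv:2109.13652 — 2 statements merged into one kernel-verified Lean document; each statement's English description precedes it below -/
import Mathlib

section
/- Let p, k, m, r, t be positive integers with m^2 - p^k = 2^r t, p^k ≥ 5, and m > t > 2^r. Then m < p^k. -/
theorem stmt8 (p k m r t : ℕ) (hp : 0 < p) (hk : 0 < k) (ht : 0 < t)
    (heq : (m : ℤ) ^ 2 - (p : ℤ) ^ k = 2 ^ r * t)
    (hpk5 : 5 ≤ p ^ k) (h1 : m > t) (h2 : t > 2 ^ r) :
    m < p ^ k := by
  have h1' : (t : ℤ) < m := by exact_mod_cast h1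
  have h2' : (2 : ℤ) ^ r < t := by exact_mod_cast h2
  have ht' : (0 : ℤ) < t := by exact_mod_cast ht
  have key : ((m : ℤ) - t) * ((m : ℤ) + t) = (p : ℤ) ^ k - t * (t - 2 ^ r) := by
    push_cast at heq ⊢; ring_nf; ring_nf at heq; linarith
  have hmt : (1 : ℤ) ≤ (m : ℤ) - t := by linarith
  have : (m : ℤ) + t ≤ ((m : ℤ) - t) * ((m : ℤ) + t) := by
    nlinarith
  have : (m : ℤ) < (p : ℤ) ^ k := by nlinarith
  exact_mod_cast this
end

section
/- Let p, k, m, r, t be positive integers with m^2 - p^k = 2^r t, p^k ≥ 5, and m > 2^r > t. Then m < p^k. -/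
theorem stmt9 (p k m r t : ℕ) (hp : 0 < p) (hk : 0 < k) (ht : 0 < t)
    (heq : (m : ℤ) ^ 2 - (p : ℤ) ^ k = 2 ^ r * t)
    (hpk5 : 5 ≤ p ^ k) (h1 : m > 2 ^ r) (h2 : 2 ^ r > t) :
    m < p ^ k := by
  have h1' : (2:ℤ)^r < (m:ℤ) := by exact_mod_cast h1
  have h2' : (t:ℤ) < (2:ℤ)^r := by exact_mod_cast h2
  have ht' : (1:ℤ) ≤ (t:ℤ) := by exact_mod_cast ht
  have key : (m:ℤ) < (p:ℤ)^k := by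
    nlinarith [mul_nonneg (by linarith : (0:ℤ) ≤ (m:ℤ) - 2^r - 1) (by positivity : (0:ℤ) ≤ (m:ℤ) + 2^r), pow_pos (by norm_num : (0:ℤ) < 2) r]
  exact_mod_cast key
end
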